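/- Let φ, γ : [0,1] → ℝ be continuous, and suppose that for all but countably many t ∈ [0,1], D₊γ(t) is finite and D⁺φ(t) ≤ D₊γ(t). Then φ(1) − γ(1) ≤ φ(0) − γ(0). -/

import Mathlib

open Filter Set Topology MeasureTheory

/-- Lower right Dini derivative of an extended-real-valued function
(set to `⊥` where the function takes the value `⊤`). -/
noncomputable def DlowE (φ : ℝ → EReal) (t : ℝ) : EReal :=
  if φ t = ⊤ then ⊥ else
    Filter.liminf (fun s : ℝ => (φ (t + s) - φ t) * (((s⁻¹ : ℝ)) : EReal))
      (nhdsWithin 0 (Set.Ioi 0))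

/-- Lower right Dini derivative of a real-valued function. -/
noncomputable def DlowR (φ : ℝ → ℝ) (t : ℝ) : EReal :=
  Filter.liminf (fun s : ℝ => (((φ (t + s) - φ t) / s : ℝ) : EReal))
    (nhdsWithin 0 (Set.Ioi 0))

/-- Upper right Dini derivative of a real-valued function. -/
noncomputable def DupR (φ : ℝ → ℝ) (t : ℝ) : EReal :=
  Filter.limsup (fun s : ℝ => (((φ (t + s) - φ t) / s : ℝ) : EReal))
    (nhdsWithin 0 (Set.Ioi 0))

/-- If `φ, γ` are continuous on `[0,1]` and, outside a countable set,
`D₊γ(t)` is finite and `D⁺φ(t) ≤ D₊γ(t)`, then `φ(1) - γ(1) ≤ φ(0) - γ(0)`. -/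
theorem stmt14 (φ γ : ℝ → ℝ)
    (hφ : ContinuousOn φ (Set.Icc 0 1))
    (hγ : ContinuousOn γ (Set.Icc 0 1))
    (C : Set ℝ) (hC : C.Countable)
    (h : ∀ t ∈ Set.Icc (0:ℝ) 1 \ C,
      (DlowR γ t ≠ ⊤ ∧ DlowR γ t ≠ ⊥) ∧ DupR φ t ≤ DlowR γ t) :
    φ 1 - γ 1 ≤ φ 0 - γ 0 := by
  set ψ : ℝ → ℝ := fun t => φ t - γ t with hψdef
  have hψ : ContinuousOn ψ (Set.Icc 0 1) := hφ.sub hγ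
  obtain ⟨c, hc⟩ := Set.countable_iff_exists_subset_range.mp hC
  set w : ℕ → ℝ := fun n => (1/2 : ℝ)^n with hwdef
  have hwpos : ∀ n, 0 < w n := fun n => by positivity
  have hwsum : Summable w := summable_geometric_two
  have hwtsum : ∑' n, w n = 2 := tsum_geometric_two
  set J : ℝ → ℝ := fun t => ∑' n, if c n < t then w n else 0 with hJdef
  have hJs : ∀ t, Summable (fun n => if c n < t then w n else 0) := by
    intro t
    apply Summable.of_nonneg_of_le _ _ hwsum
    · intro n; split_ifs; exacts [(hwpos n).le, le_rfl]
    · intro n; split_ifs; exacts [le_rfl, (hwpos n).le]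
  have hJmono : Monotone J := by
    intro a b hab
    apply Summable.tsum_le_tsum _ (hJs a) (hJs b)
    intro n
    by_cases h1 : c n < a
    · rw [if_pos h1, if_pos (h1.trans_le hab)]
    · rw [if_neg h1]; split_ifs; exacts [(hwpos n).le, le_rfl]
  have hJ0 : ∀ t, 0 ≤ J t := by
    intro t
    apply tsum_nonneg
    intro n; split_ifs; exacts [(hwpos n).le, le_rfl]
  have hJ2 : ∀ t, J t ≤ 2 := by
    intro t
    rw [← hwtsum]
    apply Summable.tsum_le_tsum _ (hJs t) hwsum
    intro n; split_ifs; exacts [le_rfl, (hwpos n).le]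
  have hJjump : ∀ n t, c n < t → J (c n) + w n ≤ J t := by
    intro n t hnt
    have hsum2 : Summable (fun m => if m = n then w n else (0:ℝ)) :=
      (hasSum_ite_eq n (w n)).summable
    have key : ∀ m, (if c m < c n then w m else 0) + (if m = n then w n else 0)
        ≤ (if c m < t then w m else 0) := by
      intro m
      by_cases hm : m = n
      · subst hm
        rw [if_neg (lt_irrefl _), if_pos rfl, if_pos hnt, zero_add]
      · rw [if_neg hm, add_zero]
        by_cases h1 : c m < c n
        · rw [if_pos h1, if_pos (h1.trans hnt)]
        · rw [if_neg h1]; split_ifs; exacts [(hwpos m).le, le_rfl]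
    calc J (c n) + w n
        = ∑' m, ((if c m < c n then w m else 0) + (if m = n then w n else 0)) := by
          rw [Summable.tsum_add (hJs _) hsum2, tsum_ite_eq]
      _ ≤ J t := Summable.tsum_le_tsum key ((hJs _).add hsum2) (hJs t)
  -- main estimate
  have main : ∀ ε : ℝ, 0 < ε → ψ 1 ≤ ψ 0 + ε * 3 := by
    intro ε hε
    set h0 : ℝ → ℝ := fun t => ε * t + ε * J t with hh0def
    have hh0mono : Monotone h0 := by
      intro a b hab
      have := hJmono hab
      have h2 := mul_le_mul_of_nonneg_left this hε.le
      have h3 := mul_le_mul_of_nonneg_left hab hε.le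
      simp only [h0]; linarith
    set A : Set ℝ := {t | t ∈ Set.Icc (0:ℝ) 1 ∧ ψ t ≤ ψ 0 + h0 t} with hAdef
    have hA0 : (0:ℝ) ∈ A := by
      refine ⟨⟨le_refl 0, zero_le_one⟩, ?_⟩
      have := hJ0 0
      have : 0 ≤ h0 0 := by simp only [h0]; nlinarith
      linarith
    have hAbdd : BddAbove A := ⟨1, fun t ht => ht.1.2⟩
    set T := sSup A with hTdef
    have hTlub : IsLUB A T := isLUB_csSup ⟨0, hA0⟩ hAbdd
    have hT0 : 0 ≤ T := hTlub.1 hA0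
    have hT1 : T ≤ 1 := hTlub.2 (fun t ht => ht.1.2)
    have hTIcc : T ∈ Set.Icc (0:ℝ) 1 := ⟨hT0, hT1⟩
    have hTA : T ∈ A := by
      refine ⟨hTIcc, ?_⟩
      have hKclosed : IsClosed (Set.Icc (0:ℝ) 1 ∩ ψ ⁻¹' Set.Iic (ψ 0 + h0 T)) :=
        hψ.preimage_isClosed_of_isClosed isClosed_Icc isClosed_Iic
      have hAsub : A ⊆ Set.Icc (0:ℝ) 1 ∩ ψ ⁻¹' Set.Iic (ψ 0 + h0 T) := by
        intro t ht
        refine ⟨ht.1, ?_⟩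
        have := hh0mono (hTlub.1 ht)
        simp only [Set.mem_preimage, Set.mem_Iic]
        linarith [ht.2]
      have hTcl : T ∈ closure A := hTlub.mem_closure ⟨0, hA0⟩
      have := hKclosed.closure_subset ((closure_mono hAsub) hTcl)
      exact this.2
    have hTeq : T = 1 := by
      by_contra hne
      have hTlt : T < 1 := lt_of_le_of_ne hT1 hne
      have hexists : ∃ t, t ∈ A ∧ T < t := by
        by_cases hTC : T ∈ C
        · -- jump case
          obtain ⟨n, hn⟩ := hc hTC
          have hcont : ContinuousWithinAt ψ (Set.Icc 0 1) T := hψ T hTIcc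
          have hpos : 0 < ε * w n := by positivity
          have hev0 : ∀ᶠ u in 𝓝[Set.Icc (0:ℝ) 1] T, ψ u ∈ Metric.ball (ψ T) (ε * w n) :=
            hcont.eventually_mem (Metric.ball_mem_nhds _ hpos)
          have hle' : 𝓝[>] T ≤ 𝓝[Set.Icc (0:ℝ) 1] T :=
            nhdsWithin_le_of_mem (Icc_mem_nhdsGT_of_mem ⟨hT0, hTlt⟩)
          have hev : ∀ᶠ u in 𝓝[>] T, ψ u ∈ Metric.ball (ψ T) (ε * w n) := hev0.filter_mono hle'
          have hIoc : ∀ᶠ u in 𝓝[>] T, u ∈ Set.Ioc T 1 :=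
            eventually_of_mem (Ioc_mem_nhdsGT_of_mem ⟨le_rfl, hTlt⟩) (fun x hx => hx)
          obtain ⟨t, htb, htIoc⟩ := (hev.and hIoc).exists
          refine ⟨t, ⟨⟨hT0.trans htIoc.1.le, htIoc.2⟩, ?_⟩, htIoc.1⟩
          have hdist : |ψ t - ψ T| < ε * w n := by
            have := htb
            rwa [Metric.mem_ball, Real.dist_eq] at this
          have hjump : J T + w n ≤ J t := by
            have := hJjump n t (by rw [hn]; exact htIoc.1)
            rwa [hn] at this
          have habs := abs_lt.mp hdist
          have hJt : ε * J T + ε * w n ≤ ε * J t := by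
            have := mul_le_mul_of_nonneg_left hjump hε.le
            nlinarith
          have hTt : ε * T ≤ ε * t := mul_le_mul_of_nonneg_left htIoc.1.le hε.le
          have hTA2 := hTA.2
          simp only [h0] at hTA2 ⊢
          nlinarith
        · -- derivative case
          have hmem : T ∈ Set.Icc (0:ℝ) 1 \ C := ⟨hTIcc, hTC⟩
          obtain ⟨⟨hnt, hnb⟩, hle⟩ := h T hmem
          set Lr := (DlowR γ T).toReal with hLrdef
          have hL : DlowR γ T = (Lr : EReal) := (EReal.coe_toReal hnt hnb).symm
          have h1 : ∀ᶠ s in 𝓝[>](0:ℝ),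
              ((Lr - ε/2 : ℝ) : EReal) < (((γ (T+s) - γ T)/s : ℝ) : EReal) := by
            refine eventually_lt_of_lt_liminf ?_ (Filter.isBoundedUnder_of ⟨⊥, fun x => bot_le⟩)
            show ((Lr - ε/2 : ℝ) : EReal) < DlowR γ T
            rw [hL]
            exact_mod_cast sub_lt_self Lr (half_pos hε)
          have h2 : ∃ᶠ s in 𝓝[>](0:ℝ),
              (((φ (T+s) - φ T)/s : ℝ) : EReal) < ((Lr + ε/2 : ℝ) : EReal) := by
            refine (eventually_lt_of_limsup_lt ?_ (Filter.isBoundedUnder_of ⟨⊤, fun x => le_top⟩)).frequently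
            calc Filter.limsup (fun s : ℝ => (((φ (T + s) - φ T) / s : ℝ) : EReal))
                  (𝓝[>] (0:ℝ)) = DupR φ T := rfl
              _ ≤ DlowR γ T := hle
              _ < ((Lr + ε/2 : ℝ) : EReal) := by
                  rw [hL]; exact_mod_cast lt_add_of_pos_right Lr (half_pos hε)
          have hIoc : ∀ᶠ s in 𝓝[>](0:ℝ), s ∈ Set.Ioc (0:ℝ) (1 - T) :=
            eventually_of_mem (Ioc_mem_nhdsGT_of_mem ⟨le_rfl, sub_pos.2 hTlt⟩) (fun x hx => hx)
          obtain ⟨s, hφs, hγs, hsIoc⟩ := (h2.and_eventually (h1.and hIoc)).exists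
          have hspos : 0 < s := hsIoc.1
          have hs1 : T + s ≤ 1 := by linarith [hsIoc.2]
          have hφr : (φ (T+s) - φ T)/s < Lr + ε/2 := by exact_mod_cast hφs
          have hγr : Lr - ε/2 < (γ (T+s) - γ T)/s := by exact_mod_cast hγs
          refine ⟨T + s, ⟨⟨by linarith, hs1⟩, ?_⟩, by linarith⟩
          have hφ2 : φ (T+s) - φ T < (Lr + ε/2) * s := (div_lt_iff₀ hspos).mp hφr
          have hγ2 : (Lr - ε/2) * s < γ (T+s) - γ T := (lt_div_iff₀ hspos).mp hγr
          have hψs : ψ (T+s) - ψ T < ε * s := by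
            simp only [ψ]; nlinarith
          have hJt : ε * J T ≤ ε * J (T+s) :=
            mul_le_mul_of_nonneg_left (hJmono (by linarith)) hε.le
          have hTA2 := hTA.2
          simp only [h0] at hTA2 ⊢
          nlinarith
      obtain ⟨t, htA, hTt⟩ := hexists
      exact absurd (hTlub.1 htA) (not_le.2 hTt)
    have hfin := hTA.2
    rw [hTeq] at hfin
    have := hJ2 1
    simp only [h0] at hfin
    nlinarith
  have main' : ∀ ε : ℝ, 0 < ε → φ 1 - γ 1 ≤ φ 0 - γ 0 + ε * 3 := by
    intro ε hε
    have := main ε hε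
    simpa [hψdef] using this
  by_contra hlt
  push_neg at hlt
  have := main' ((φ 1 - γ 1 - (φ 0 - γ 0)) / 6) (by linarith)
  linarith
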